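/- arXiv:1404.0002 — 4 statements merged into one kernel-verified Lean document; each statement's English description precedes it below -/
import Mathlib

section
/- Let K be a field, q ∈ K a nonzero element, R an associative unital K-algebra, and x, d ∈ R satisfying d·x = q·(x·d) + 1. Set θ := x·d and, for j ∈ ℕ, [j]_q := Σ_{i=0}^{j−1} q^i. Then for every m ≥ 1: q^{T_{m−1}}·x^m·d^m = ∏_{j=0}^{m−1} (θ − [j]_q·1), where T_{m−1} := (m−1)m/2 is the (m−1)-st triangular number; equivalently x^m·d^m = q^{−T_{m−1}} ∏_{j=0}^{m−1} (θ − [j]_q·1). -/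
private lemma dpow_mul_x_aux {K : Type*} [Field K] {R : Type*} [Ring R] [Algebra K R]
    (q : K) (x d : R) (hrel : d * x = q • (x * d) + 1) (m : ℕ) :
    d ^ (m + 1) * x = q ^ (m + 1) • (x * d ^ (m + 1))
      + (∑ i ∈ Finset.range (m + 1), q ^ i) • d ^ m := by
  induction m with
  | zero => simpa using hrel
  | succ n ih =>
      have h1 : d ^ (n + 2) * x = d * (d ^ (n + 1) * x) := by
        rw [pow_succ', mul_assoc]
      have e1 : d * (x * d ^ (n + 1)) = q • (x * d ^ (n + 2)) + d ^ (n + 1) := by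
        rw [← mul_assoc, hrel, add_mul, one_mul, smul_mul_assoc, mul_assoc, ← pow_succ']
      have e2 : d * d ^ n = d ^ (n + 1) := (pow_succ' d n).symm
      rw [h1, ih, mul_add, mul_smul_comm, e1, mul_smul_comm, e2,
        Finset.sum_range_succ (fun i => q ^ i) (n + 1), add_smul, smul_add, smul_smul,
        ← pow_succ]
      abel

/-- Let `K` be a field, `q ∈ K` nonzero, `R` an associative unital
`K`-algebra, and `x, d ∈ R` with `d·x = q·(x·d) + 1`.  With `θ := x·d`,
`[j]_q := ∑_{i=0}^{j−1} q^i` and `T_{m−1} := (m−1)m/2`, for every `m ≥ 1`: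
`q^{T_{m−1}}·x^m·d^m = ∏_{j=0}^{m−1} (θ − [j]_q·1)`. -/
theorem xm_dm_eq_prod_theta_qWeyl {K : Type*} [Field K] {R : Type*} [Ring R] [Algebra K R]
    (q : K) (hq : q ≠ 0) (x d : R) (hrel : d * x = q • (x * d) + 1)
    (m : ℕ) (hm : 1 ≤ m) :
    q ^ ((m - 1) * m / 2) • (x ^ m * d ^ m)
      = ((List.range m).map fun j : ℕ =>
          (x * d) - (∑ i ∈ Finset.range j, q ^ i) • (1 : R)).prod := by
  have key : ∀ n : ℕ, q ^ (∑ i ∈ Finset.range n, i) • (x ^ n * d ^ n)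
      = ((List.range n).map fun j : ℕ =>
          (x * d) - (∑ i ∈ Finset.range j, q ^ i) • (1 : R)).prod := by
    intro n
    induction n with
    | zero => simp
    | succ k ih =>
        rw [List.range_succ, List.map_append, List.prod_append, ← ih]
        simp only [List.map_cons, List.map_nil, List.prod_cons, List.prod_nil, mul_one]
        cases k with
        | zero => simp
        | succ j =>
            set k := j + 1 with hk
            have e1 : x ^ k * d ^ k * (x * d)
                = q ^ k • (x ^ (k + 1) * d ^ (k + 1))
                  + (∑ i ∈ Finset.range k, q ^ i) • (x ^ k * d ^ k) := by
              have h0 : x ^ k * d ^ k * (x * d) = x ^ k * (d ^ k * x) * d := by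
                simp only [mul_assoc]
              rw [h0, dpow_mul_x_aux q x d hrel j]
              simp only [mul_add, add_mul, mul_smul_comm, smul_mul_assoc, mul_assoc,
                pow_succ]
              simp only [hk, pow_succ, mul_assoc]
            rw [smul_mul_assoc, mul_sub, mul_smul_comm, mul_one, e1,
              Finset.sum_range_succ (fun i => i) k, add_sub_cancel_right,
              smul_smul, ← pow_add]
  have h := key m
  rwa [Finset.sum_range_id, Nat.mul_comm] at h
end

section
/- The family of operators {X^a ∘ D^b : a, b ∈ ℕ^n} is linearly independent over K in the endomorphism algebra of K[x_1,…,x_n]; consequently every element of A_n has a unique representation Σ c_{a,b} X^a ∘ D^b with c_{a,b} ∈ K, almost all zero. -/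
open MvPolynomial

/-- Multiplication by the variable `x i`, as a `K`-linear endomorphism of
`K[x_1,…,x_n]`. -/
noncomputable def Xop (K : Type) [Field K] {n : ℕ} (i : Fin n) :
    Module.End K (MvPolynomial (Fin n) K) :=
  LinearMap.mulLeft K (X i)

/-- The `i`-th partial derivative, as a `K`-linear endomorphism of `K[x_1,…,x_n]`. -/
noncomputable def Dop (K : Type) [Field K] {n : ℕ} (i : Fin n) :
    Module.End K (MvPolynomial (Fin n) K) :=
  (pderiv i).toLinearMap

/-- `X^a := X_1^{a_1} ∘ ⋯ ∘ X_n^{a_n}`. -/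
noncomputable def Xpow (K : Type) [Field K] {n : ℕ} (a : Fin n → ℕ) :
    Module.End K (MvPolynomial (Fin n) K) :=
  (List.ofFn fun i => Xop K i ^ a i).prod

/-- `D^b := D_1^{b_1} ∘ ⋯ ∘ D_n^{b_n}`. -/
noncomputable def Dpow (K : Type) [Field K] {n : ℕ} (b : Fin n → ℕ) :
    Module.End K (MvPolynomial (Fin n) K) :=
  (List.ofFn fun i => Dop K i ^ b i).prod

/-- The `n`-th Weyl algebra `A_n`, realized as the `K`-subalgebra of
`End_K(K[x_1,…,x_n])` generated by `X_1,…,X_n, D_1,…,D_n`. -/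
noncomputable def WeylAlg (K : Type) [Field K] (n : ℕ) :
    Subalgebra K (Module.End K (MvPolynomial (Fin n) K)) :=
  Algebra.adjoin K (Set.range (Xop K (n := n)) ∪ Set.range (Dop K (n := n)))

/-- The `i`-th Euler operator `θ_i := X_i ∘ D_i`. -/
noncomputable def thetaOp (K : Type) [Field K] {n : ℕ} (i : Fin n) :
    Module.End K (MvPolynomial (Fin n) K) :=
  Xop K i * Dop K i

/-- Evaluation `f ↦ f(θ_1,…,θ_n)` of a polynomial `f ∈ K[t_1,…,t_n]` at the (pairwise
commuting) Euler operators. -/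
noncomputable def thetaEval (K : Type) [Field K] {n : ℕ}
    (f : MvPolynomial (Fin n) K) : Module.End K (MvPolynomial (Fin n) K) :=
  ∑ m ∈ f.support, f.coeff m • (List.ofFn fun i => thetaOp K i ^ m i).prod

/-- The `z`-th graded part `A_n^{(z)}`: the `K`-linear span of the operators
`X^a ∘ D^b` with `b − a = z` componentwise. -/
noncomputable def gradePart (K : Type) [Field K] {n : ℕ} (z : Fin n → ℤ) :
    Submodule K (Module.End K (MvPolynomial (Fin n) K)) :=
  Submodule.span K
    {F | ∃ a b : Fin n → ℕ, (∀ i, (b i : ℤ) - (a i : ℤ) = z i) ∧ F = Xpow K a * Dpow K b}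

/-- `e(z)_i := −z_i` if `z_i < 0`, and `0` otherwise. -/
def ez {n : ℕ} (z : Fin n → ℤ) : Fin n → ℕ := fun i => (-(z i)).toNat

/-- `w(z)_i := z_i` if `z_i > 0`, and `0` otherwise. -/
def wz {n : ℕ} (z : Fin n → ℤ) : Fin n → ℕ := fun i => (z i).toNat

namespace WeylAux


theorem listOfFn_pow_add {M : Type*} [Monoid M] : ∀ {n : ℕ} (f : Fin n → M),
    (∀ i j, Commute (f i) (f j)) → ∀ b c : Fin n → ℕ,
    (List.ofFn fun i => f i ^ (b i + c i)).prod
      = (List.ofFn fun i => f i ^ b i).prod * (List.ofFn fun i => f i ^ c i).prod := by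
  intro n
  induction n with
  | zero => intro f hf b c; simp
  | succ n ih =>
    intro f hf b c
    have h := ih (fun i => f i.succ) (fun i j => hf i.succ j.succ)
      (fun i => b i.succ) (fun i => c i.succ)
    simp only [List.ofFn_succ, List.prod_cons] at h ⊢
    rw [h, pow_add]
    have hc : Commute (f 0 ^ c 0) ((List.ofFn fun i => f i.succ ^ b i.succ).prod) := by
      apply Commute.list_prod_right
      intro x hx
      obtain ⟨i, rfl⟩ := List.mem_ofFn.mp hx
      exact (hf 0 i.succ).pow_pow _ _
    rw [mul_assoc, mul_assoc, ← mul_assoc (f 0 ^ c 0), hc.eq, mul_assoc]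

theorem listOfFn_pow_ite {M : Type*} [Monoid M] : ∀ {n : ℕ} (f : Fin n → M) (i : Fin n) (c : ℕ),
    (List.ofFn fun j => f j ^ (if j = i then c else 0)).prod = f i ^ c := by
  intro n
  induction n with
  | zero => exact fun f i c => i.elim0
  | succ n ih =>
    intro f i c
    induction i using Fin.cases with
    | zero =>
      simp only [List.ofFn_succ, List.prod_cons, if_pos rfl]
      have : (List.ofFn fun j : Fin n => f j.succ ^ (if j.succ = (0 : Fin (n+1)) then c else 0)).prod = 1 := by
        apply List.prod_eq_one
        intro x hx
        obtain ⟨j, rfl⟩ := List.mem_ofFn.mp hx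
        simp [Fin.succ_ne_zero]
      rw [this, mul_one]; simp
    | succ i =>
      simp only [List.ofFn_succ, List.prod_cons]
      have h0 : (0 : Fin (n+1)) ≠ i.succ := (Fin.succ_ne_zero i).symm
      rw [if_neg h0, pow_zero, one_mul]
      have := ih (fun j => f j.succ) i c
      simpa [Fin.succ_inj] using this


variable {K : Type} [Field K] {n : ℕ}

/-- `F a` : the finsupp version of `a : Fin n → ℕ`. -/
noncomputable def F {n : ℕ} (a : Fin n → ℕ) : Fin n →₀ ℕ := Finsupp.equivFunOnFinite.symm a

@[simp] theorem F_apply (a : Fin n → ℕ) (j : Fin n) : F a j = a j := rfl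

theorem F_injective : Function.Injective (F (n := n)) := Finsupp.equivFunOnFinite.symm.injective

/-- the indicator vector. -/
def eN {n : ℕ} (i : Fin n) : Fin n → ℕ := fun j => if j = i then 1 else 0

theorem pderiv_pderiv (i j : Fin n) (p : MvPolynomial (Fin n) K) :
    pderiv i (pderiv j p) = pderiv j (pderiv i p) := by
  induction p using MvPolynomial.induction_on' with
  | add p q hp hq => simp [hp, hq]
  | monomial s a =>
    rcases eq_or_ne i j with rfl | hij
    · rfl
    · have e1 : ((s - Finsupp.single j 1 : Fin n →₀ ℕ)) i = s i := by
        rw [Finsupp.tsub_apply, Finsupp.single_eq_of_ne' hij.symm, tsub_zero]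
      have e2 : ((s - Finsupp.single i 1 : Fin n →₀ ℕ)) j = s j := by
        rw [Finsupp.tsub_apply, Finsupp.single_eq_of_ne' hij, tsub_zero]
      rw [pderiv_monomial, pderiv_monomial, pderiv_monomial, pderiv_monomial,
        e1, e2, tsub_tsub, tsub_tsub, add_comm (Finsupp.single j 1), mul_right_comm]

theorem commute_Dop (i j : Fin n) : Commute (Dop K i) (Dop K j) :=
  LinearMap.ext fun p => pderiv_pderiv i j p

theorem commute_Xop (i j : Fin n) : Commute (Xop K i) (Xop K j) :=
  LinearMap.ext fun p => by
    simp only [Xop, Module.End.mul_apply, LinearMap.mulLeft_apply]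
    ring

theorem mulLeft_eq_lmul (p : MvPolynomial (Fin n) K) :
    LinearMap.mulLeft K p = Algebra.lmul K (MvPolynomial (Fin n) K) p := by
  ext q
  simp [Algebra.coe_lmul_eq_mul, LinearMap.mul_apply']

theorem prod_X_pow_univ (a : Fin n → ℕ) :
    (∏ i, X i ^ a i : MvPolynomial (Fin n) K) = monomial (F a) 1 := by
  rw [← prod_X_pow_eq_monomial]
  apply (Finset.prod_subset (Finset.subset_univ _) _).symm
  intro i _ hi
  have : F a i = 0 := by simpa [Finsupp.mem_support_iff] using hi
  simp only [F_apply] at this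
  simp [this]

theorem Xpow_eq (a : Fin n → ℕ) :
    Xpow K a = LinearMap.mulLeft K (monomial (F a) (1 : K)) := by
  rw [Xpow, mulLeft_eq_lmul, ← prod_X_pow_univ, ← Fin.prod_ofFn,
    map_list_prod, List.map_ofFn]
  congr 1
  rw [List.ofFn_inj]
  funext i
  simp only [Function.comp_apply, map_pow]
  rw [Xop, mulLeft_eq_lmul]

theorem Dpow_add (b c : Fin n → ℕ) : Dpow K (b + c) = Dpow K b * Dpow K c :=
  listOfFn_pow_add _ commute_Dop b c

theorem Dpow_eN (i : Fin n) : Dpow K (eN i) = Dop K i := by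
  rw [Dpow]
  simpa [eN] using listOfFn_pow_ite (fun i => Dop K i) i 1

theorem Xpow_add (b c : Fin n → ℕ) : Xpow K (b + c) = Xpow K b * Xpow K c :=
  listOfFn_pow_add _ commute_Xop b c

theorem Xpow_eN (i : Fin n) : Xpow K (eN i) = Xop K i := by
  rw [Xpow]
  simpa [eN] using listOfFn_pow_ite (fun i => Xop K i) i 1

theorem Dpow_zero : Dpow K (0 : Fin n → ℕ) = 1 := by
  rw [Dpow]
  apply List.prod_eq_one
  intro x hx
  obtain ⟨i, rfl⟩ := List.mem_ofFn.mp hx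
  simp

theorem Xpow_zero : Xpow K (0 : Fin n → ℕ) = 1 := by
  rw [Xpow]
  apply List.prod_eq_one
  intro x hx
  obtain ⟨i, rfl⟩ := List.mem_ofFn.mp hx
  simp

theorem Dop_mul_mulLeft (i : Fin n) (p : MvPolynomial (Fin n) K) :
    Dop K i * LinearMap.mulLeft K p
      = LinearMap.mulLeft K p * Dop K i + LinearMap.mulLeft K (pderiv i p) := by
  refine LinearMap.ext fun q => ?_
  simp only [Module.End.mul_apply, LinearMap.add_apply, LinearMap.mulLeft_apply, Dop,
    Derivation.coeFn_coe]
  rw [pderiv_mul]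
  ring

theorem Dpow_monomial : ∀ (N : ℕ) (b : Fin n → ℕ), (∑ i, b i) = N → ∀ (s : Fin n →₀ ℕ) (c : K),
    Dpow K b (monomial s c)
      = monomial (s - F b) (c * ((∏ i, (s i).descFactorial (b i) : ℕ) : K)) := by
  intro N
  induction N with
  | zero =>
    intro b hb s c
    have hb0 : b = 0 := by
      funext i
      exact (Finset.sum_eq_zero_iff.mp hb) i (Finset.mem_univ i)
    subst hb0
    have : F (0 : Fin n → ℕ) = 0 := by ext j; simp [F]
    simp [Dpow_zero, this]
  | succ N ih =>
    intro b hb s c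
    have hex : ∃ i, b i ≠ 0 := by
      by_contra h
      push_neg at h
      have : b = 0 := funext h
      subst this
      simp at hb
    obtain ⟨i, hi⟩ := hex
    set b' : Fin n → ℕ := fun j => if j = i then b i - 1 else b j with hb'
    have hbe : b' + eN i = b := by
      funext j
      rcases eq_or_ne j i with rfl | hj
      · simp [b', eN, Nat.sub_add_cancel (Nat.one_le_iff_ne_zero.mpr hi)]
      · simp [b', eN, hj]
    have hsum' : (∑ j, b' j) = N := by
      have h1 : (∑ j, b j) = b i + ∑ j ∈ Finset.univ.erase i, b j :=
        (Finset.add_sum_erase _ _ (Finset.mem_univ i)).symm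
      have h2 : (∑ j, b' j) = b' i + ∑ j ∈ Finset.univ.erase i, b' j :=
        (Finset.add_sum_erase _ _ (Finset.mem_univ i)).symm
      have h3 : ∑ j ∈ Finset.univ.erase i, b' j = ∑ j ∈ Finset.univ.erase i, b j := by
        apply Finset.sum_congr rfl
        intro j hj
        simp [b', Finset.ne_of_mem_erase hj]
      have hbi : b i = (b i - 1) + 1 := (Nat.sub_add_cancel (Nat.one_le_iff_ne_zero.mpr hi)).symm
      have : b' i = b i - 1 := by simp [b']
      omega
    have hD : Dpow K b = Dpow K b' * Dop K i := by
      rw [← hbe, Dpow_add, Dpow_eN]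
    rw [hD]
    have happ : (Dpow K b' * Dop K i) (monomial s c) = Dpow K b' (Dop K i (monomial s c)) := rfl
    rw [happ]
    have hDi : Dop K i (monomial s c) = monomial (s - Finsupp.single i 1) (c * s i) := by
      simp [Dop, pderiv_monomial]
    rw [hDi, ih b' hsum']
    have hexp : (Finsupp.single i 1) + F b' = F b := by
      ext j
      rcases eq_or_ne j i with rfl | hj
      · rw [Finsupp.add_apply, Finsupp.single_eq_same]
        show 1 + b' j = b j
        have : b' j = b j - 1 := by simp [b']
        omega
      · rw [Finsupp.add_apply, Finsupp.single_eq_of_ne' (Ne.symm hj)]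
        show 0 + b' j = b j
        simp [b', hj]
    congr 1
    · rw [tsub_tsub, hexp]
    · -- coefficients
      have hsplit : ∀ (f : Fin n → ℕ), (∏ j, f j) = f i * ∏ j ∈ Finset.univ.erase i, f j :=
        fun f => (Finset.mul_prod_erase _ _ (Finset.mem_univ i)).symm
      have lhsK : (c * (s i : K)) * ((∏ j, ((s - Finsupp.single i 1 : Fin n →₀ ℕ) j).descFactorial (b' j) : ℕ) : K)
          = c * ((s i * ∏ j, ((s - Finsupp.single i 1 : Fin n →₀ ℕ) j).descFactorial (b' j) : ℕ) : K) := by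
        push_cast
        ring
      rw [lhsK]
      congr 2
      rw [hsplit (fun j => ((s - Finsupp.single i 1 : Fin n →₀ ℕ) j).descFactorial (b' j)),
        hsplit (fun j => (s j).descFactorial (b j)), ← mul_assoc]
      have herase : ∏ j ∈ Finset.univ.erase i, ((s - Finsupp.single i 1 : Fin n →₀ ℕ) j).descFactorial (b' j)
          = ∏ j ∈ Finset.univ.erase i, (s j).descFactorial (b j) := by
        apply Finset.prod_congr rfl
        intro j hj
        have hj' := Finset.ne_of_mem_erase hj
        have e1 : ((s - Finsupp.single i 1 : Fin n →₀ ℕ)) j = s j := by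
          rw [Finsupp.tsub_apply, Finsupp.single_eq_of_ne' (Ne.symm hj'), tsub_zero]
        have e2 : b' j = b j := by simp [b', hj']
        rw [e1, e2]
      rw [herase]
      congr 1
      have e1 : ((s - Finsupp.single i 1 : Fin n →₀ ℕ)) i = s i - 1 := by
        rw [Finsupp.tsub_apply, Finsupp.single_eq_same]
      have e2 : b' i = b i - 1 := by simp [b']
      rw [e1, e2]
      -- s i * desc (s i - 1) (b i - 1) = desc (s i) (b i)
      obtain ⟨k, hk⟩ : ∃ k, b i = k + 1 := ⟨b i - 1, by omega⟩
      rw [hk]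
      simp only [Nat.add_sub_cancel]
      cases hsi : s i with
      | zero => simp
      | succ m =>
        simp only [Nat.succ_sub_one]
        rw [Nat.succ_descFactorial_succ]

theorem term_apply_monomial (p : (Fin n → ℕ) × (Fin n → ℕ)) (m : Fin n → ℕ) :
    (Xpow K p.1 * Dpow K p.2) (monomial (F m) (1 : K))
      = monomial (F p.1 + (F m - F p.2))
          ((∏ i, (m i).descFactorial (p.2 i) : ℕ) : K) := by
  have h1 : (Xpow K p.1 * Dpow K p.2) (monomial (F m) (1 : K))
      = Xpow K p.1 (Dpow K p.2 (monomial (F m) (1 : K))) := rfl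
  rw [h1, Dpow_monomial (∑ i, p.2 i) p.2 rfl, Xpow_eq, LinearMap.mulLeft_apply,
    monomial_mul]
  simp [F_apply]

theorem cm_ne_zero [CharZero K] (m : Fin n → ℕ) :
    ((∏ i, (m i).descFactorial (m i) : ℕ) : K) ≠ 0 := by
  rw [Nat.cast_ne_zero]
  refine (Finset.prod_pos fun i _ => ?_).ne'
  rw [Nat.descFactorial_self]
  exact Nat.factorial_pos _

theorem weyl_li [CharZero K] :
    LinearIndependent K (fun p : (Fin n → ℕ) × (Fin n → ℕ) => Xpow K p.1 * Dpow K p.2) := by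
  classical
  rw [linearIndependent_iff']
  intro s g hsum p₀ hp₀
  by_contra h0
  set s' := s.filter (fun p => g p ≠ 0) with hs'
  have hp₀' : p₀ ∈ s' := Finset.mem_filter.mpr ⟨hp₀, h0⟩
  set T := s'.image Prod.snd with hT
  have hTne : T.Nonempty := ⟨p₀.2, Finset.mem_image_of_mem _ hp₀'⟩
  obtain ⟨m, hmT, hmin⟩ := T.exists_minimal hTne
  obtain ⟨pm, hpmm, hpm2⟩ := Finset.mem_image.mp hmT
  have hpm_s : pm ∈ s := (Finset.mem_filter.mp hpmm).1
  have hpm_g : g pm ≠ 0 := (Finset.mem_filter.mp hpmm).2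
  -- apply the vanishing sum of operators to the monomial x^m
  have happ := congrArg
    (fun (L : Module.End K (MvPolynomial (Fin n) K)) => L (monomial (F m) (1 : K))) hsum
  simp only [LinearMap.coe_sum, Finset.sum_apply, LinearMap.smul_apply,
    LinearMap.zero_apply] at happ
  have happ2 : ∑ p ∈ s, g p • monomial (F p.1 + (F m - F p.2))
      ((∏ i, (m i).descFactorial (p.2 i) : ℕ) : K) = 0 := by
    rw [← happ]
    apply Finset.sum_congr rfl
    intro p _
    rw [term_apply_monomial]
  set P : (Fin n → ℕ) × (Fin n → ℕ) → Prop := fun p => p.2 = m ∧ g p ≠ 0 with hP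
  have hfilter : ∑ p ∈ s.filter P, g p • monomial (F p.1 + (F m - F p.2))
      ((∏ i, (m i).descFactorial (p.2 i) : ℕ) : K) = 0 := by
    rw [← happ2]
    apply Finset.sum_filter_of_ne
    intro p hps hne
    constructor
    · -- p.2 = m
      by_contra hp2
      have hgp : g p ≠ 0 := by
        intro h; apply hne; rw [h, zero_smul]
      have hpT : p.2 ∈ T := Finset.mem_image_of_mem _ (Finset.mem_filter.mpr ⟨hps, hgp⟩)
      have hnotle : ¬ p.2 ≤ m := by
        intro hle
        exact hp2 (le_antisymm hle (hmin hpT hle))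
      obtain ⟨i, hi⟩ : ∃ i, m i < p.2 i := by
        rw [Pi.le_def] at hnotle
        push_neg at hnotle
        exact hnotle
      apply hne
      have : (∏ i, (m i).descFactorial (p.2 i)) = 0 :=
        Finset.prod_eq_zero (Finset.mem_univ i)
          ((Nat.descFactorial_eq_zero_iff_lt).mpr hi)
      rw [this]
      simp
    · intro h; apply hne; rw [h, zero_smul]
  have hfilter2 : ∑ p ∈ s.filter P, monomial (F p.1)
      (g p * ((∏ i, (m i).descFactorial (m i) : ℕ) : K)) = 0 := by
    rw [← hfilter]
    apply Finset.sum_congr rfl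
    intro p hp
    have hp2 : p.2 = m := ((Finset.mem_filter.mp hp).2).1
    rw [hp2, tsub_self, add_zero, smul_monomial, smul_eq_mul]
  have hcoeff := congrArg (fun q => coeff (F pm.1) q) hfilter2
  simp only [coeff_zero] at hcoeff
  rw [coeff_sum] at hcoeff
  have hsingle := Finset.sum_eq_single_of_mem
    (s := s.filter P)
    (f := fun p => coeff (F pm.1) (monomial (F p.1)
      (g p * ((∏ i, (m i).descFactorial (m i) : ℕ) : K))))
    pm (Finset.mem_filter.mpr ⟨hpm_s, hpm2, hpm_g⟩)
    (by
      intro q hq hqne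
      rw [coeff_monomial, if_neg]
      intro hFeq
      apply hqne
      have hq1 : q.1 = pm.1 := F_injective hFeq
      have hq2 : q.2 = pm.2 := by
        rw [((Finset.mem_filter.mp hq).2).1, hpm2]
      exact Prod.ext hq1 hq2)
  rw [hsingle] at hcoeff
  rw [coeff_monomial, if_pos rfl] at hcoeff
  exact hpm_g (by
    rcases mul_eq_zero.mp hcoeff with h | h
    · exact h
    · exact absurd h (cm_ne_zero m))

theorem mulLeft_smul (c : K) (p : MvPolynomial (Fin n) K) :
    LinearMap.mulLeft K (c • p) = c • LinearMap.mulLeft K p := by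
  refine LinearMap.ext fun q => ?_
  simp [smul_mul_assoc]

theorem Dop_mul_Xpow (i : Fin n) (a : Fin n → ℕ) :
    Dop K i * Xpow K a = Xpow K a * Dop K i + (a i : K) • Xpow K (a - eN i) := by
  rw [Xpow_eq, Dop_mul_mulLeft, ← Xpow_eq]
  congr 1
  rw [pderiv_monomial, one_mul]
  have he : F a - Finsupp.single i 1 = F (a - eN i) := by
    ext j
    rcases eq_or_ne j i with rfl | hj
    · rw [Finsupp.tsub_apply, Finsupp.single_eq_same, F_apply, F_apply]
      simp [eN]
    · rw [Finsupp.tsub_apply, Finsupp.single_eq_of_ne' (Ne.symm hj), F_apply, F_apply]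
      simp [eN, hj]
  have hc : (monomial (F (a - eN i)) ((F a i : K))) = (a i : K) • monomial (F (a - eN i)) (1 : K) := by
    rw [smul_monomial, smul_eq_mul, mul_one, F_apply]
  rw [he, hc, mulLeft_smul, Xpow_eq]

theorem Dop_mul_basis (i : Fin n) (a b : Fin n → ℕ) :
    Dop K i * (Xpow K a * Dpow K b)
      = Xpow K a * Dpow K (eN i + b) + (a i : K) • (Xpow K (a - eN i) * Dpow K b) := by
  rw [← mul_assoc, Dop_mul_Xpow, add_mul, smul_mul_assoc, mul_assoc, Dpow_add, Dpow_eN]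

theorem Xop_mul_basis (i : Fin n) (a b : Fin n → ℕ) :
    Xop K i * (Xpow K a * Dpow K b) = Xpow K (eN i + a) * Dpow K b := by
  rw [← mul_assoc, Xpow_add, Xpow_eN]

theorem weyl_span :
    Subalgebra.toSubmodule (WeylAlg K n) =
      Submodule.span K
        (Set.range fun p : (Fin n → ℕ) × (Fin n → ℕ) => Xpow K p.1 * Dpow K p.2) := by
  set S := Submodule.span K
    (Set.range fun p : (Fin n → ℕ) × (Fin n → ℕ) => Xpow K p.1 * Dpow K p.2) with hS
  have hmem : ∀ a b : Fin n → ℕ, Xpow K a * Dpow K b ∈ S :=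
    fun a b => Submodule.subset_span ⟨(a, b), rfl⟩
  have hX : ∀ (i : Fin n), ∀ y ∈ S, Xop K i * y ∈ S := by
    intro i y hy
    refine Submodule.span_induction ?_ ?_ ?_ ?_ hy
    · rintro _ ⟨⟨a, b⟩, rfl⟩
      rw [Xop_mul_basis]
      exact hmem _ _
    · rw [mul_zero]; exact S.zero_mem
    · intro x y _ _ hx hy
      rw [mul_add]; exact S.add_mem hx hy
    · intro c x _ hx
      rw [mul_smul_comm]; exact S.smul_mem c hx
  have hD : ∀ (i : Fin n), ∀ y ∈ S, Dop K i * y ∈ S := by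
    intro i y hy
    refine Submodule.span_induction ?_ ?_ ?_ ?_ hy
    · rintro _ ⟨⟨a, b⟩, rfl⟩
      rw [Dop_mul_basis]
      exact S.add_mem (hmem _ _) (S.smul_mem _ (hmem _ _))
    · rw [mul_zero]; exact S.zero_mem
    · intro x y _ _ hx hy
      rw [mul_add]; exact S.add_mem hx hy
    · intro c x _ hx
      rw [mul_smul_comm]; exact S.smul_mem c hx
  have h1 : (1 : Module.End K (MvPolynomial (Fin n) K)) ∈ S := by
    have := hmem 0 0
    rwa [Xpow_zero, Dpow_zero, one_mul] at this
  apply le_antisymm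
  · rw [WeylAlg, Algebra.adjoin_eq_span, Submodule.span_le]
    intro w hw
    have key : ∀ y ∈ S, w * y ∈ S := by
      refine Submonoid.closure_induction
        (motive := fun w _ => ∀ y ∈ S, w * y ∈ S) ?_ ?_ ?_ hw
      · rintro x (⟨i, rfl⟩ | ⟨i, rfl⟩)
        · exact hX i
        · exact hD i
      · intro y hy; rwa [one_mul]
      · intro x y _ _ px py z hz
        rw [mul_assoc]
        exact px _ (py z hz)
    have := key 1 h1
    rwa [mul_one] at this
  · rw [Submodule.span_le]
    rintro _ ⟨⟨a, b⟩, rfl⟩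
    show Xpow K a * Dpow K b ∈ WeylAlg K n
    apply mul_mem
    · apply Subalgebra.list_prod_mem
      intro x hx
      obtain ⟨i, rfl⟩ := List.mem_ofFn.mp hx
      refine pow_mem ?_ _
      exact Algebra.subset_adjoin (Set.mem_union_left _ ⟨i, rfl⟩)
    · apply Subalgebra.list_prod_mem
      intro x hx
      obtain ⟨i, rfl⟩ := List.mem_ofFn.mp hx
      refine pow_mem ?_ _
      exact Algebra.subset_adjoin (Set.mem_union_right _ ⟨i, rfl⟩)

end WeylAux

/-- The family `{X^a ∘ D^b : a, b ∈ ℕ^n}` is linearly independent over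
`K` in `End_K(K[x_1,…,x_n])`; consequently every element of `A_n` has a unique
representation `Σ c_{a,b} X^a ∘ D^b` (the family is moreover a spanning set of `A_n`). -/
theorem weyl_monomials_linearIndependent (K : Type) [Field K] [CharZero K]
    (n : ℕ) (hn : 0 < n) :
    LinearIndependent K
      (fun p : (Fin n → ℕ) × (Fin n → ℕ) => Xpow K p.1 * Dpow K p.2) ∧
    Subalgebra.toSubmodule (WeylAlg K n) =
      Submodule.span K
        (Set.range fun p : (Fin n → ℕ) × (Fin n → ℕ) => Xpow K p.1 * Dpow K p.2) := by
  exact ⟨WeylAux.weyl_li, WeylAux.weyl_span⟩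
end

section
/- The K-linear span of the operators {X^a ∘ D^a : a ∈ ℕ^n} equals the set {f(θ) : f ∈ K[t_1,…,t_n]}, i.e. the image of the K-algebra homomorphism K[t_1,…,t_n] → End_K(K[x_1,…,x_n]) sending t_i ↦ θ_i; moreover this homomorphism is injective. In other words, the 0-th graded part of A_n is an isomorphic copy of the polynomial ring K[θ_1,…,θ_n]. -/
open MvPolynomial

namespace Aux
variable {K : Type} [Field K] {n : ℕ}

lemma endext {F G : Module.End K (MvPolynomial (Fin n) K)}
    (h : ∀ (s : Fin n →₀ ℕ) (c : K), F (monomial s c) = G (monomial s c)) : F = G := by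
  refine LinearMap.ext fun p => ?_
  induction p using MvPolynomial.induction_on' with
  | monomial u a => exact h u a
  | add p q hp hq => simp [map_add, hp, hq]

lemma Dop_pow_monomial (i : Fin n) (k : ℕ) (s : Fin n →₀ ℕ) (c : K) :
    (Dop K i ^ k) (monomial s c) =
      monomial (s - Finsupp.single i k) (((s i).descFactorial k : ℕ) * c) := by
  induction k with
  | zero => simp
  | succ k ih =>
      rw [pow_succ', Module.End.mul_apply, ih]
      show (pderiv i) _ = _
      rw [pderiv_monomial]
      have he : s - Finsupp.single i k - Finsupp.single i 1 = s - Finsupp.single i (k+1) := by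
        ext j
        simp only [Finsupp.coe_tsub, Pi.sub_apply, Finsupp.single_apply]
        split_ifs <;> omega
      have hc : ((s - Finsupp.single i k) i) = s i - k := by
        simp [Finsupp.coe_tsub]
      rw [he, hc]
      congr 1
      rw [Nat.descFactorial_succ, Nat.cast_mul]
      ring

lemma mulLeft_list_prod (l : List (MvPolynomial (Fin n) K)) :
    (l.map (LinearMap.mulLeft K)).prod = LinearMap.mulLeft K l.prod := by
  induction l with
  | nil => simp [LinearMap.mulLeft_one]; rfl
  | cons x t ih => simp [ih, LinearMap.mulLeft_mul]; rfl

lemma Xpow_eq_mulLeft (a : Fin n → ℕ) :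
    Xpow K a = LinearMap.mulLeft K (monomial (∑ i, Finsupp.single i (a i)) (1 : K)) := by
  unfold Xpow Xop
  rw [show (List.ofFn fun i => LinearMap.mulLeft K ((X i : MvPolynomial (Fin n) K)) ^ a i)
      = (List.ofFn fun i => (X i : MvPolynomial (Fin n) K) ^ a i).map (LinearMap.mulLeft K) by
    rw [List.map_ofFn]
    congr 1
    funext i
    exact LinearMap.pow_mulLeft K _ _ _]
  rw [mulLeft_list_prod, List.prod_ofFn]
  congr 1
  rw [monomial_sum_one]
  simp [X_pow_eq_monomial]

lemma Dlist_monomial (b : Fin n → ℕ) (l : List (Fin n)) (hl : l.Nodup)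
    (s : Fin n →₀ ℕ) (c : K) :
    ((l.map fun i => Dop K i ^ b i).prod) (monomial s c) =
      monomial (s - (l.map fun i => Finsupp.single i (b i)).sum)
        (((l.map fun i => ((s i).descFactorial (b i) : K)).prod) * c) := by
  induction l with
  | nil => simp
  | cons j t ih =>
      have hj : j ∉ t := (List.nodup_cons.1 hl).1
      have ht : t.Nodup := (List.nodup_cons.1 hl).2
      simp only [List.map_cons, List.prod_cons, List.sum_cons, Module.End.mul_apply, ih ht]
      rw [Dop_pow_monomial]
      have hzero : ((t.map fun i => Finsupp.single i (b i)).sum) j = 0 := by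
        rw [← Finsupp.applyAddHom_apply, map_list_sum, List.map_map]
        apply List.sum_eq_zero
        intro x hx
        obtain ⟨i, hi, rfl⟩ := List.mem_map.1 hx
        have : i ≠ j := fun h => hj (h ▸ hi)
        simp [Finsupp.applyAddHom_apply, Finsupp.single_apply, this]
      have hs : (s - (t.map fun i => Finsupp.single i (b i)).sum) j = s j := by
        simp [Finsupp.coe_tsub, hzero]
      rw [hs]
      congr 1
      · rw [tsub_tsub, add_comm]
      · ring

lemma Dpow_monomial (b : Fin n → ℕ) (s : Fin n →₀ ℕ) (c : K) :
    Dpow K b (monomial s c) =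
      monomial (s - ∑ i, Finsupp.single i (b i))
        ((∏ i, ((s i).descFactorial (b i) : K)) * c) := by
  unfold Dpow
  rw [List.ofFn_eq_map, Dlist_monomial b _ (List.nodup_finRange n)]
  rw [← List.ofFn_eq_map, ← List.ofFn_eq_map, List.sum_ofFn, List.prod_ofFn]

lemma XD_monomial (a : Fin n → ℕ) (s : Fin n →₀ ℕ) (c : K) :
    (Xpow K a * Dpow K a) (monomial s c) =
      (∏ i, ((s i).descFactorial (a i) : K)) • monomial s c := by
  rw [Module.End.mul_apply, Dpow_monomial, Xpow_eq_mulLeft]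
  rw [LinearMap.mulLeft_apply, monomial_mul, one_mul, smul_monomial, smul_eq_mul]
  by_cases hle : ∀ i, a i ≤ s i
  · have he : (∑ i, Finsupp.single i (a i)) + (s - ∑ i, Finsupp.single i (a i)) = s := by
      ext j
      have hu : (∑ i, Finsupp.single i (a i)) j = a j := by
        rw [Finsupp.finset_sum_apply]
        simp [Finsupp.single_apply]
      simp only [Finsupp.add_apply, Finsupp.coe_tsub, Pi.sub_apply, hu]
      have := hle j
      omega
    rw [he]
  · push_neg at hle
    obtain ⟨i, hi⟩ := hle
    have hP : (∏ i, ((s i).descFactorial (a i) : K)) = 0 := by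
      apply Finset.prod_eq_zero (Finset.mem_univ i)
      rw [Nat.descFactorial_eq_zero_iff_lt.2 hi, Nat.cast_zero]
    rw [hP, zero_mul]
    rw [map_zero, map_zero]

lemma thetaOp_monomial (i : Fin n) (s : Fin n →₀ ℕ) (c : K) :
    thetaOp K i (monomial s c) = (s i : K) • monomial s c := by
  rw [thetaOp, Module.End.mul_apply]
  show (LinearMap.mulLeft K (X i)) ((pderiv i) _) = _
  rw [pderiv_monomial, LinearMap.mulLeft_apply]
  have hX : (X i : MvPolynomial (Fin n) K) = monomial (Finsupp.single i 1) 1 := by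
    rw [← X_pow_eq_monomial, pow_one]
  rw [hX, monomial_mul, one_mul, smul_monomial, smul_eq_mul, mul_comm]
  rcases Nat.eq_zero_or_pos (s i) with h | h
  · simp [h]
  · have he : Finsupp.single i 1 + (s - Finsupp.single i 1) = s := by
      ext j
      simp only [Finsupp.add_apply, Finsupp.coe_tsub, Pi.sub_apply, Finsupp.single_apply]
      split_ifs with hj
      · subst hj; omega
      · omega
    rw [he]

lemma thetaOp_pow_monomial (i : Fin n) (k : ℕ) (s : Fin n →₀ ℕ) (c : K) :
    (thetaOp K i ^ k) (monomial s c) = ((s i : K) ^ k) • monomial s c := by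
  induction k with
  | zero => simp
  | succ k ih =>
      rw [pow_succ', Module.End.mul_apply, ih, map_smul, thetaOp_monomial, smul_smul, pow_succ']
      rw [mul_comm]

lemma list_eigen {ι : Type*} (s : Fin n →₀ ℕ) (l : List ι)
    (g : ι → Module.End K (MvPolynomial (Fin n) K)) (μ : ι → K)
    (h : ∀ i ∈ l, ∀ c : K, g i (monomial s c) = μ i • monomial s c) (c : K) :
    ((l.map g).prod) (monomial s c) = (l.map μ).prod • monomial s c := by
  induction l with
  | nil => simp
  | cons j t ih =>
      simp only [List.map_cons, List.prod_cons, Module.End.mul_apply]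
      rw [ih (fun i hi => h i (List.mem_cons_of_mem _ hi)), map_smul,
        h j List.mem_cons_self, smul_smul, mul_comm]

lemma Tprod_monomial (m : Fin n → ℕ) (s : Fin n →₀ ℕ) (c : K) :
    ((List.ofFn fun i => thetaOp K i ^ m i).prod) (monomial s c) =
      (∏ i, (s i : K) ^ m i) • monomial s c := by
  rw [List.ofFn_eq_map,
    list_eigen s _ (fun i => thetaOp K i ^ m i) (fun i => (s i : K) ^ m i)
      (fun i _ c => thetaOp_pow_monomial i (m i) s c) c,
    ← List.ofFn_eq_map, List.prod_ofFn]

lemma thetaEval_monomial (f : MvPolynomial (Fin n) K) (s : Fin n →₀ ℕ) (c : K) :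
    thetaEval K f (monomial s c) = (eval (fun i => (s i : K)) f) • monomial s c := by
  rw [thetaEval, LinearMap.sum_apply, eval_eq']
  rw [Finset.sum_smul]
  refine Finset.sum_congr rfl fun m _ => ?_
  rw [LinearMap.smul_apply, Tprod_monomial, smul_smul]

lemma dF_succ_cast (m k : ℕ) :
    ((m.descFactorial (k+1) : ℕ) : K) = ((m : K) - k) * (m.descFactorial k : ℕ) := by
  rcases le_or_gt k m with h | h
  · rw [Nat.descFactorial_succ, Nat.cast_mul, Nat.cast_sub h]
  · rw [Nat.descFactorial_eq_zero_iff_lt.2 h,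
      Nat.descFactorial_eq_zero_iff_lt.2 (h.trans (Nat.lt_succ_self k))]
    simp

lemma dF_cast (m k : ℕ) :
    ((m.descFactorial k : ℕ) : K) = ∏ j ∈ Finset.range k, ((m : K) - j) := by
  induction k with
  | zero => simp
  | succ k ih => rw [Finset.prod_range_succ, dF_succ_cast, ih, mul_comm]

noncomputable def ffac (a : Fin n → ℕ) : MvPolynomial (Fin n) K :=
  ∏ i, ∏ j ∈ Finset.range (a i), (X i - C (j : K))

lemma eval_ffac (a : Fin n → ℕ) (s : Fin n →₀ ℕ) :
    eval (fun i => (s i : K)) (ffac a) = ∏ i, ((s i).descFactorial (a i) : K) := by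
  rw [ffac, map_prod]
  refine Finset.prod_congr rfl fun i _ => ?_
  rw [map_prod, dF_cast]
  refine Finset.prod_congr rfl fun j _ => ?_
  rw [map_sub, eval_X, eval_C]

lemma XD_eq_thetaEval (a : Fin n → ℕ) :
    Xpow K a * Dpow K a = thetaEval K (ffac a) := by
  refine endext fun s c => ?_
  rw [XD_monomial, thetaEval_monomial, eval_ffac]


lemma thetaEval_add (f g : MvPolynomial (Fin n) K) :
    thetaEval K (f + g) = thetaEval K f + thetaEval K g := by
  refine endext fun s c => ?_
  rw [LinearMap.add_apply, thetaEval_monomial, thetaEval_monomial, thetaEval_monomial,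
    map_add, add_smul]

lemma thetaEval_smul (r : K) (f : MvPolynomial (Fin n) K) :
    thetaEval K (r • f) = r • thetaEval K f := by
  refine endext fun s c => ?_
  have hev : eval (fun i => ((s i : K))) (r • f) = r * eval (fun i => ((s i : K))) f := by
    rw [smul_eq_C_mul, map_mul, eval_C]
  rw [LinearMap.smul_apply, thetaEval_monomial, thetaEval_monomial, hev, mul_smul]

lemma thetaEval_zero : thetaEval K (0 : MvPolynomial (Fin n) K) = 0 := by
  simp [thetaEval]

lemma thetaEval_mul (f g : MvPolynomial (Fin n) K) :
    thetaEval K (f * g) = thetaEval K f * thetaEval K g := by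
  refine endext fun s c => ?_
  rw [Module.End.mul_apply, thetaEval_monomial, thetaEval_monomial, map_smul,
    thetaEval_monomial, smul_smul, map_mul]
  congr 1
  ring

lemma thetaEval_one : thetaEval K (1 : MvPolynomial (Fin n) K) = 1 := by
  refine endext fun s c => ?_
  rw [thetaEval_monomial, map_one, one_smul, Module.End.one_apply]

-- the span
local notation "W" => Submodule.span K (Set.range fun a : Fin n → ℕ => Xpow K a * Dpow K a)

lemma Xpow_zero_fun : Xpow K (fun _ : Fin n => 0) = 1 := by
  simp [Xpow, pow_zero, List.ofFn_const, List.prod_replicate, one_pow]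

lemma Dpow_zero_fun : Dpow K (fun _ : Fin n => 0) = 1 := by
  simp [Dpow, pow_zero, List.ofFn_const, List.prod_replicate, one_pow]

lemma one_mem_W : (1 : Module.End K (MvPolynomial (Fin n) K)) ∈ W := by
  have : (1 : Module.End K (MvPolynomial (Fin n) K))
      = Xpow K (fun _ => 0) * Dpow K (fun _ => 0) := by
    rw [Xpow_zero_fun, Dpow_zero_fun, one_mul]
  rw [this]
  exact Submodule.subset_span ⟨fun _ => 0, rfl⟩

lemma theta_mul_XD (i : Fin n) (a : Fin n → ℕ) :
    thetaOp K i * (Xpow K a * Dpow K a)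
      = Xpow K (Function.update a i (a i + 1)) * Dpow K (Function.update a i (a i + 1))
        + (a i : K) • (Xpow K a * Dpow K a) := by
  refine endext fun s c => ?_
  rw [Module.End.mul_apply, XD_monomial, map_smul, thetaOp_monomial, LinearMap.add_apply,
    XD_monomial, LinearMap.smul_apply, XD_monomial, smul_smul, smul_smul, ← add_smul]
  congr 1
  have h1 : ∏ j, ((s j).descFactorial (Function.update a i (a i + 1) j) : K)
      = ((s i).descFactorial (a i + 1) : K) * ∏ j ∈ Finset.univ.erase i,
          ((s j).descFactorial (a j) : K) := by
    rw [← Finset.mul_prod_erase Finset.univ _ (Finset.mem_univ i), Function.update_self]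
    congr 1
    refine Finset.prod_congr rfl fun j hj => ?_
    rw [Function.update_of_ne (Finset.mem_erase.1 hj).1]
  rw [h1, ← Finset.mul_prod_erase Finset.univ
    (fun j => ((s j).descFactorial (a j) : K)) (Finset.mem_univ i), dF_succ_cast]
  ring

lemma theta_mul_mem_W (i : Fin n) {w : Module.End K (MvPolynomial (Fin n) K)}
    (hw : w ∈ W) : thetaOp K i * w ∈ W := by
  induction hw using Submodule.span_induction with
  | mem x hx =>
      obtain ⟨a, rfl⟩ := hx
      rw [theta_mul_XD]
      exact Submodule.add_mem _ (Submodule.subset_span ⟨_, rfl⟩)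
        (Submodule.smul_mem _ _ (Submodule.subset_span ⟨a, rfl⟩))
  | zero => rw [mul_zero]; exact Submodule.zero_mem _
  | add x y _ _ hx hy => rw [mul_add]; exact Submodule.add_mem _ hx hy
  | smul r x _ hx => rw [mul_smul_comm]; exact Submodule.smul_mem _ _ hx

lemma Tprod_mem_W (m : Fin n → ℕ) :
    (List.ofFn fun i => thetaOp K i ^ m i).prod ∈ W := by
  suffices H : ∀ N (m : Fin n → ℕ), (∑ i, m i) = N →
      (List.ofFn fun i => thetaOp K i ^ m i).prod ∈ W from H _ m rfl
  intro N
  induction N using Nat.strong_induction_on with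
  | _ N ih =>
    intro m hm
    by_cases h0 : ∀ i, m i = 0
    · have : (List.ofFn fun i => thetaOp K i ^ m i).prod
          = (1 : Module.End K (MvPolynomial (Fin n) K)) := by
        simp [h0]
      rw [this]; exact one_mem_W
    · push_neg at h0
      obtain ⟨i, hi⟩ := h0
      set m' := Function.update m i (m i - 1) with hm'
      have hkey : (List.ofFn fun j => thetaOp K j ^ m j).prod
          = thetaOp K i * (List.ofFn fun j => thetaOp K j ^ m' j).prod := by
        refine endext fun s c => ?_
        rw [Tprod_monomial, Module.End.mul_apply, Tprod_monomial, map_smul,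
          thetaOp_monomial, smul_smul]
        congr 1
        rw [← Finset.mul_prod_erase Finset.univ (fun j => (s j : K) ^ m j)
            (Finset.mem_univ i),
          ← Finset.mul_prod_erase Finset.univ (fun j => (s j : K) ^ m' j)
            (Finset.mem_univ i)]
        have he : ∏ j ∈ Finset.univ.erase i, (s j : K) ^ m' j
            = ∏ j ∈ Finset.univ.erase i, (s j : K) ^ m j := by
          refine Finset.prod_congr rfl fun j hj => ?_
          rw [hm', Function.update_of_ne (Finset.mem_erase.1 hj).1]
        rw [he, hm', Function.update_self]
        have : (s i : K) ^ m i = (s i : K) * (s i : K) ^ (m i - 1) := by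
          rw [← pow_succ']
          congr 1
          omega
        rw [this]
        ring
      rw [hkey]
      refine theta_mul_mem_W i (ih (∑ j, m' j) ?_ m' rfl)
      rw [← hm]
      apply Finset.sum_lt_sum
      · intro j _
        rcases eq_or_ne j i with rfl | hji
        · rw [hm', Function.update_self]; omega
        · rw [hm', Function.update_of_ne hji]
      · exact ⟨i, Finset.mem_univ i, by rw [hm', Function.update_self]; omega⟩

lemma thetaEval_mem_W (f : MvPolynomial (Fin n) K) : thetaEval K f ∈ W := by
  rw [thetaEval]
  refine Submodule.sum_mem _ fun m _ => Submodule.smul_mem _ _ ?_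
  exact Tprod_mem_W (fun i => m i)

lemma vanish_nat [CharZero K] : ∀ {m : ℕ} (f : MvPolynomial (Fin m) K),
    (∀ s : Fin m → ℕ, eval (fun i => (s i : K)) f = 0) → f = 0 := by
  intro m
  induction m with
  | zero =>
      intro f h
      obtain ⟨c, rfl⟩ := C_surjective (Fin 0) f
      have := h fun _ => 0
      rw [eval_C] at this
      rw [this, map_zero]
  | succ m ih =>
      intro f h
      have key : ∀ k, (finSuccEquiv K m f).coeff k = 0 := by
        intro k
        apply ih
        intro y
        have hpoly : Polynomial.map (eval fun i => (y i : K)) (finSuccEquiv K m f) = 0 := by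
          apply Polynomial.eq_zero_of_infinite_isRoot
          refine Set.infinite_of_injective_forall_mem (f := fun t : ℕ => (t : K))
            Nat.cast_injective fun t => ?_
          show Polynomial.IsRoot _ _
          rw [Polynomial.IsRoot, ← eval_eq_eval_mv_eval']
          have hc : (Fin.cons (t : K) (fun i => (y i : K)) : Fin (m+1) → K)
              = fun i => (((Fin.cons t y : Fin (m+1) → ℕ) i : ℕ) : K) := by
            funext i
            refine Fin.cases ?_ ?_ i <;> simp
          rw [hc]
          exact h (Fin.cons t y)
        rw [← Polynomial.coeff_map (eval fun i => (y i : K)) k, hpoly, Polynomial.coeff_zero]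
      have hq : finSuccEquiv K m f = 0 := Polynomial.ext fun k => by
        rw [key k, Polynomial.coeff_zero]
      have h2 := congrArg (finSuccEquiv K m).symm hq
      simpa using h2

end Aux


open Aux in
/-- The `K`-linear span of `{X^a ∘ D^a : a ∈ ℕ^n}` equals the image of
the `K`-algebra homomorphism `K[t_1,…,t_n] → End_K(K[x_1,…,x_n])`, `t_i ↦ θ_i`
(which is indeed multiplicative and unital), and this homomorphism is injective:
the `0`-th graded part of `A_n` is an isomorphic copy of `K[θ_1,…,θ_n]`. -/
theorem zeroth_graded_part_eq_theta_polynomials (K : Type) [Field K] [CharZero K]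
    (n : ℕ) (hn : 0 < n) :
    (∀ F : Module.End K (MvPolynomial (Fin n) K),
        F ∈ Submodule.span K (Set.range fun a : Fin n → ℕ => Xpow K a * Dpow K a) ↔
          ∃ f : MvPolynomial (Fin n) K, F = thetaEval K f) ∧
    (∀ f g : MvPolynomial (Fin n) K,
        thetaEval K (f * g) = thetaEval K f * thetaEval K g) ∧
    thetaEval K (1 : MvPolynomial (Fin n) K) = 1 ∧
    Function.Injective (thetaEval K (n := n)) := by
  refine ⟨?_, thetaEval_mul, thetaEval_one, ?_⟩
  · intro F
    constructor
    · intro hF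
      induction hF using Submodule.span_induction with
      | mem x hx =>
          obtain ⟨a, rfl⟩ := hx
          exact ⟨ffac a, (XD_eq_thetaEval a)⟩
      | zero => exact ⟨0, thetaEval_zero.symm⟩
      | add x y _ _ hx hy =>
          obtain ⟨f, rfl⟩ := hx
          obtain ⟨g, rfl⟩ := hy
          exact ⟨f + g, (thetaEval_add f g).symm⟩
      | smul r x _ hx =>
          obtain ⟨f, rfl⟩ := hx
          exact ⟨r • f, (thetaEval_smul r f).symm⟩
    · rintro ⟨f, rfl⟩
      exact thetaEval_mem_W f
  · intro f g h
    have hev : ∀ s : Fin n →₀ ℕ,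
        MvPolynomial.eval (fun i => (s i : K)) f = MvPolynomial.eval (fun i => (s i : K)) g := by
      intro s
      have h1 := LinearMap.congr_fun h (MvPolynomial.monomial s (1 : K))
      rw [thetaEval_monomial, thetaEval_monomial] at h1
      have h2 := congrArg (MvPolynomial.coeff s) h1
      rwa [MvPolynomial.coeff_smul, MvPolynomial.coeff_smul, MvPolynomial.coeff_monomial,
        if_pos rfl, smul_eq_mul, smul_eq_mul, mul_one, mul_one] at h2
    have hsub : f - g = 0 := by
      apply vanish_nat
      intro u
      have := hev (Finsupp.equivFunOnFinite.symm u)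
      rw [map_sub]
      have hcoe : (fun i => (((Finsupp.equivFunOnFinite.symm u : Fin n →₀ ℕ) i : ℕ) : K))
          = fun i => ((u i : ℕ) : K) := rfl
      rw [hcoe] at this
      rw [this, sub_self]
    exact sub_eq_zero.1 hsub
end

section
/- For all α, β ∈ ℤ^n and all f, g ∈ K[t_1,…,t_n]: (f(θ) ∘ X^{e(α)} ∘ D^{w(α)}) ∘ (g(θ) ∘ X^{e(β)} ∘ D^{w(β)}) = (f · g^{[α]} · γ_{α,β})(θ) ∘ X^{e(α+β)} ∘ D^{w(α+β)}, where g^{[α]} ∈ K[t_1,…,t_n] denotes g with each variable t_i replaced by t_i + α_i. In particular, the product of a homogeneous element of degree α and a homogeneous element of degree β is homogeneous of degree α + β, with θ-rewriting given by f · g^{[α]} · γ_{α,β}. -/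
open MvPolynomial

/-- The polynomial `γ̃^{(κ)}_{a,b} ∈ K[t_1,…,t_n]` from the paper:
`1` if `a, b ≥ 0` or `a, b ≤ 0`;
`∏_{τ=0}^{|a|−1}(t_κ − τ)` if `a < 0 < b`, `|a| ≤ |b|`;
`∏_{τ=0}^{|b|−1}(t_κ − τ − |a| + |b|)` if `a < 0 < b`, `|a| > |b|`;
`∏_{τ=1}^{a}(t_κ + τ)` if `b < 0 < a`, `|a| ≤ |b|`;
`∏_{τ=1}^{|b|}(t_κ + τ + |a| − |b|)` if `b < 0 < a`, `|a| > |b|`. -/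
noncomputable def gammaT (K : Type) [Field K] {n : ℕ} (κ : Fin n) (a b : ℤ) :
    MvPolynomial (Fin n) K :=
  if (0 ≤ a ∧ 0 ≤ b) ∨ (a ≤ 0 ∧ b ≤ 0) then 1
  else if a < 0 ∧ 0 < b ∧ a.natAbs ≤ b.natAbs then
    ∏ τ ∈ Finset.range a.natAbs, (X κ - (τ : MvPolynomial (Fin n) K))
  else if a < 0 ∧ 0 < b then
    ∏ τ ∈ Finset.range b.natAbs,
      (X κ - (τ : MvPolynomial (Fin n) K)
        - (a.natAbs : MvPolynomial (Fin n) K) + (b.natAbs : MvPolynomial (Fin n) K))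
  else if 0 < a ∧ b < 0 ∧ a.natAbs ≤ b.natAbs then
    ∏ τ ∈ Finset.range a.natAbs, (X κ + ((τ : MvPolynomial (Fin n) K) + 1))
  else
    ∏ τ ∈ Finset.range b.natAbs,
      (X κ + ((τ : MvPolynomial (Fin n) K) + 1)
        + (a.natAbs : MvPolynomial (Fin n) K) - (b.natAbs : MvPolynomial (Fin n) K))

/-- `γ_{α,β} := ∏_{κ=1}^{n} γ̃^{(κ)}_{α_κ,β_κ}`. -/
noncomputable def gammaPoly (K : Type) [Field K] {n : ℕ} (α β : Fin n → ℤ) :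
    MvPolynomial (Fin n) K :=
  ∏ κ : Fin n, gammaT K κ (α κ) (β κ)

/-- `g^{[α]}`: the polynomial `g` with each variable `t_i` replaced by `t_i + α_i`. -/
noncomputable def shiftPoly (K : Type) [Field K] {n : ℕ} (α : Fin n → ℤ)
    (g : MvPolynomial (Fin n) K) : MvPolynomial (Fin n) K :=
  MvPolynomial.aeval (fun i => X i + MvPolynomial.C ((α i : K))) g

section Aux
open Finset
variable (K : Type) [Field K] {n : ℕ}

/-- descending factorial in K -/
noncomputable def descK (s k : ℕ) : K := ∏ τ ∈ Finset.range k, ((s:K) - (τ:K))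

@[simp] lemma descK_zero (s : ℕ) : descK K s 0 = 1 := by simp [descK]

lemma descK_eq_zero {s k : ℕ} (h : s < k) : descK K s k = 0 :=
  Finset.prod_eq_zero (Finset.mem_range.mpr h) (by simp)

lemma descK_ne_zero [CharZero K] {s k : ℕ} (h : descK K s k ≠ 0) : k ≤ s := by
  by_contra hc
  exact h (descK_eq_zero K (by omega))

lemma descK_split {s k : ℕ} (h : k ≤ s) (A : ℕ) :
    descK K s (k + A) = descK K s k * descK K (s - k) A := by
  rw [descK, Finset.prod_range_add, ← descK]
  congr 1
  refine Finset.prod_congr rfl fun τ _ => ?_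
  have : ((s - k : ℕ) : K) = (s : K) - k := by push_cast [h]; ring
  rw [this]; push_cast; ring

lemma prod_desc_eq_asc (c : K) (A : ℕ) :
    ∏ τ ∈ Finset.range A, (c - τ) = ∏ τ ∈ Finset.range A, (c - A + 1 + τ) := by
  rw [← Finset.prod_range_reflect]
  refine Finset.prod_congr rfl fun j hj => ?_
  rw [Finset.mem_range] at hj
  have : ((A - 1 - j : ℕ) : K) = (A : K) - 1 - j := by
    have h1 : 1 + j ≤ A := by omega
    push_cast [Nat.sub_sub, Nat.cast_sub h1]
    ring
  rw [this]; ring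

lemma coord (a b : ℤ) (s : ℕ) {κ : Fin n} (p : Fin n → K)
    (hp : p κ = ((s - (a+b).toNat + (-(a+b)).toNat : ℕ) : K)) :
    descK K s b.toNat * descK K (s - b.toNat + (-b).toNat) a.toNat
      = descK K s (a+b).toNat * eval p (gammaT K κ a b) := by
  rcases lt_trichotomy a 0 with ha | ha | ha
  · rcases le_or_gt b 0 with hb | hb
    · -- a < 0, b ≤ 0
      rw [gammaT, if_pos (by omega)]
      have h1 : a.toNat = 0 := by omega
      have h2 : b.toNat = 0 := by omega
      have h3 : (a+b).toNat = 0 := by omega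
      simp [h1, h2, h3]
    · -- a < 0 < b
      set A' := a.natAbs with hA'
      set B := b.natAbs with hBdef
      have hB : b.toNat = B := by omega
      have h1 : a.toNat = 0 := by omega
      have h2 : (-b).toNat = 0 := by omega
      rcases le_or_gt A' B with hle | hgt
      · -- |a| ≤ |b|
        rw [gammaT, if_neg (by omega), if_pos ⟨ha, hb, hle⟩]
        have h3 : (a+b).toNat = B - A' := by omega
        have h4 : (-(a+b)).toNat = 0 := by omega
        rw [h3, h4, add_zero] at hp
        rw [hB, h1, h2, h3, add_zero, descK_zero, mul_one, map_prod]
        have hprod : (∏ τ ∈ range A', (eval p) (X κ - (τ : MvPolynomial (Fin n) K)))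
            = descK K (s - (B - A')) A' := by
          rw [descK]
          exact Finset.prod_congr rfl fun τ _ => by simp [hp]
        rw [hprod]
        rcases le_or_gt (B - A') s with hs | hs
        · rw [← descK_split K hs, Nat.sub_add_cancel hle]
        · rw [descK_eq_zero K hs, descK_eq_zero K (by omega), zero_mul]
      · -- |a| > |b|
        rw [gammaT, if_neg (by omega), if_neg (by omega), if_pos ⟨ha, hb⟩]
        have h3 : (a+b).toNat = 0 := by omega
        have h4 : (-(a+b)).toNat = A' - B := by omega
        rw [h3, h4] at hp
        rw [hB, h1, h2, h3, add_zero, descK_zero, descK_zero, mul_one, one_mul, map_prod, descK]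
        refine Finset.prod_congr rfl fun τ hτ => ?_
        simp only [map_sub, map_add, eval_X, map_natCast, hp]
        rw [show s - 0 + (A' - B) = s + (A' - B) from by omega, Nat.cast_add,
          Nat.cast_sub (by omega : B ≤ A')]
        ring
  · -- a = 0
    subst ha
    rw [gammaT, if_pos (by omega)]
    simp
  · rcases le_or_gt 0 b with hb | hb
    · -- 0 < a, 0 ≤ b
      rw [gammaT, if_pos (by omega)]
      have h2 : (-b).toNat = 0 := by omega
      have h3 : (a+b).toNat = b.toNat + a.toNat := by omega
      rw [h2, h3, add_zero, map_one, mul_one]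
      rcases le_or_gt b.toNat s with hs | hs
      · rw [descK_split K hs]
      · rw [descK_eq_zero K hs,
          descK_eq_zero K (show s < b.toNat + a.toNat by omega), zero_mul]
    · -- 0 < a, b < 0
      set A := a.natAbs with hAdef
      set B' := b.natAbs with hB'def
      have hA : a.toNat = A := by omega
      have h2 : b.toNat = 0 := by omega
      have h3 : (-b).toNat = B' := by omega
      rw [h2, h3, hA, descK_zero, one_mul, Nat.sub_zero]
      rcases le_or_gt A B' with hle | hgt
      · -- |a| ≤ |b|
        rw [gammaT, if_neg (by omega), if_neg (by omega), if_neg (by omega),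
          if_pos ⟨ha, hb, hle⟩]
        have h4 : (a+b).toNat = 0 := by omega
        have h5 : (-(a+b)).toNat = B' - A := by omega
        rw [h4, h5, Nat.sub_zero] at hp
        rw [h4, descK_zero, one_mul, map_prod, descK, prod_desc_eq_asc]
        refine Finset.prod_congr rfl fun τ hτ => ?_
        simp only [map_add, eval_X, map_natCast, map_one, hp]
        rw [Nat.cast_add, Nat.cast_add, Nat.cast_sub hle]
        ring
      · -- |a| > |b|
        rw [gammaT, if_neg (by omega), if_neg (by omega), if_neg (by omega), if_neg (by omega)]
        have h4 : (a+b).toNat = A - B' := by omega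
        have h5 : (-(a+b)).toNat = 0 := by omega
        rw [h4, h5, add_zero] at hp
        rw [h4, map_prod]
        rcases le_or_gt (A - B') s with hs | hs
        · have hprod : (∏ τ ∈ range b.natAbs,
              (eval p) (X κ + ((τ : MvPolynomial (Fin n) K) + 1)
                + (a.natAbs : MvPolynomial (Fin n) K) - (b.natAbs : MvPolynomial (Fin n) K)))
              = ∏ τ ∈ range B', ((s:K) + 1 + τ) := by
            refine Finset.prod_congr rfl fun τ hτ => ?_
            simp only [map_add, map_sub, eval_X, map_natCast, map_one, hp]
            rw [Nat.cast_sub hs, Nat.cast_sub (le_of_lt hgt)]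
            push_cast
            ring
          rw [hprod]
          have hA2 : A = B' + (A - B') := by omega
          have key : descK K (s + B') A = descK K (s + B') B' * descK K s (A - B') := by
            calc descK K (s + B') A = descK K (s + B') (B' + (A - B')) := by rw [← hA2]
              _ = descK K (s + B') B' * descK K (s + B' - B') (A - B') :=
                  descK_split K (by omega) _
              _ = descK K (s + B') B' * descK K s (A - B') := by rw [Nat.add_sub_cancel]
          rw [key, mul_comm]
          congr 1
          rw [descK, prod_desc_eq_asc]
          refine Finset.prod_congr rfl fun τ hτ => ?_
          push_cast
          ring
        · rw [descK_eq_zero K (by omega : s + B' < A), descK_eq_zero K hs, zero_mul]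
end Aux

section Aux2
open Finset
variable (K : Type) [Field K] {n : ℕ}

lemma coord_exp (a b : ℤ) {s : ℕ} (h1 : b.toNat ≤ s)
    (h2 : a.toNat ≤ s - b.toNat + (-b).toNat) :
    s - b.toNat + (-b).toNat - a.toNat + (-a).toNat = s - (a+b).toNat + (-(a+b)).toNat
    ∧ ((s - b.toNat + (-b).toNat : ℕ) : ℤ)
        = ((s - (a+b).toNat + (-(a+b)).toNat : ℕ) : ℤ) + a := by
  omega

lemma descK_succ {s : ℕ} (h : 0 < s) (k : ℕ) :
    descK K s (k+1) = descK K (s-1) k * s := by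
  simp only [descK]
  rw [Finset.prod_range_succ']
  congr 1
  · refine Finset.prod_congr rfl fun τ _ => ?_
    rw [Nat.cast_sub h]
    push_cast
    ring
  · simp

lemma Xop_monomial (i : Fin n) (m : Fin n →₀ ℕ) (c : K) :
    Xop K i (monomial m c) = monomial (Finsupp.single i 1 + m) c := by
  rw [Xop, LinearMap.mulLeft_apply, X, monomial_mul, one_mul]

lemma Xop_pow_monomial (i : Fin n) (k : ℕ) (m : Fin n →₀ ℕ) (c : K) :
    (Xop K i ^ k) (monomial m c) = monomial (Finsupp.single i k + m) c := by
  induction k generalizing m c with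
  | zero => simp
  | succ k ih =>
    rw [pow_succ, Module.End.mul_apply, Xop_monomial, ih]
    congr 1
    rw [← add_assoc, ← Finsupp.single_add]

lemma Dop_monomial (i : Fin n) (m : Fin n →₀ ℕ) (c : K) :
    Dop K i (monomial m c) = monomial (m - Finsupp.single i 1) (c * (m i : K)) := by
  simp [Dop]

lemma Dop_pow_monomial (i : Fin n) (k : ℕ) (m : Fin n →₀ ℕ) (c : K) :
    (Dop K i ^ k) (monomial m c)
      = monomial (m - Finsupp.single i k) (descK K (m i) k * c) := by
  induction k generalizing m c with
  | zero => simp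
  | succ k ih =>
    rw [pow_succ, Module.End.mul_apply, Dop_monomial, ih]
    have he : (m - Finsupp.single i 1) - Finsupp.single i k = m - Finsupp.single i (k+1) := by
      rw [tsub_tsub, ← Finsupp.single_add, add_comm (1:ℕ) k]
    have ha : (m - Finsupp.single i 1 : Fin n →₀ ℕ) i = m i - 1 := by
      rw [Finsupp.tsub_apply, Finsupp.single_eq_same]
    rcases Nat.eq_zero_or_pos (m i) with h0 | h0
    · rw [he, ha, h0]
      simp [descK_eq_zero K (show (0:ℕ) < k + 1 by omega)]
    · rw [he, ha, descK_succ K h0]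
      congr 1
      ring
end Aux2

section Aux3
open Finset
variable (K : Type) [Field K] {n : ℕ}

lemma thetaOp_monomial (i : Fin n) (m : Fin n →₀ ℕ) (c : K) :
    thetaOp K i (monomial m c) = monomial m ((m i : K) * c) := by
  rw [thetaOp, Module.End.mul_apply, Dop_monomial, Xop_monomial]
  rcases Nat.eq_zero_or_pos (m i) with h0 | h0
  · simp [h0]
  · have : Finsupp.single i 1 + (m - Finsupp.single i 1) = m := by
      ext j
      rcases eq_or_ne j i with rfl | hj
      · rw [Finsupp.add_apply, Finsupp.tsub_apply, Finsupp.single_eq_same]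
        omega
      · rw [Finsupp.add_apply, Finsupp.tsub_apply,
          Finsupp.single_eq_of_ne' (Ne.symm hj)]
        omega
    rw [this, mul_comm]

lemma thetaOp_pow_monomial (i : Fin n) (k : ℕ) (m : Fin n →₀ ℕ) (c : K) :
    (thetaOp K i ^ k) (monomial m c) = monomial m ((m i : K) ^ k * c) := by
  induction k generalizing c with
  | zero => simp
  | succ k ih =>
    rw [pow_succ, Module.End.mul_apply, thetaOp_monomial, ih]
    congr 1
    ring

noncomputable def toF {n : ℕ} (a : Fin n → ℕ) : Fin n →₀ ℕ := ∑ i, Finsupp.single i (a i)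

lemma toF_apply (a : Fin n → ℕ) (j : Fin n) : toF a j = a j := by
  rw [toF]
  rw [Finsupp.finset_sum_apply]
  simp [Finsupp.single_apply]

lemma sum_single_apply_notMem (b : Fin n → ℕ) :
    ∀ (l : List (Fin n)) {j : Fin n}, j ∉ l →
      ((l.map fun i => Finsupp.single i (b i)).sum) j = 0
  | [], j, _ => by simp
  | i :: t, j, hj => by
    rw [List.map_cons, List.sum_cons, Finsupp.add_apply,
      sum_single_apply_notMem b t (fun h => hj (List.mem_cons_of_mem _ h)),
      Finsupp.single_eq_of_ne' (by rintro rfl; exact hj (List.mem_cons_self))]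

lemma Xop_list (b : Fin n → ℕ) :
    ∀ (l : List (Fin n)) (m : Fin n →₀ ℕ) (c : K),
      ((l.map fun i => Xop K i ^ b i).prod) (monomial m c)
        = monomial ((l.map fun i => Finsupp.single i (b i)).sum + m) c
  | [], m, c => by simp
  | i :: t, m, c => by
    rw [List.map_cons, List.prod_cons, Module.End.mul_apply, Xop_list b t m c,
      Xop_pow_monomial, List.map_cons, List.sum_cons, add_assoc]

lemma Dop_list (b : Fin n → ℕ) :
    ∀ (l : List (Fin n)), l.Nodup → ∀ (m : Fin n →₀ ℕ) (c : K),
      ((l.map fun i => Dop K i ^ b i).prod) (monomial m c)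
        = monomial (m - (l.map fun i => Finsupp.single i (b i)).sum)
            ((l.map fun i => descK K (m i) (b i)).prod * c)
  | [], _, m, c => by simp
  | i :: t, hnd, m, c => by
    have hit : i ∉ t := (List.nodup_cons.mp hnd).1
    rw [List.map_cons, List.prod_cons, Module.End.mul_apply,
      Dop_list b t (List.nodup_cons.mp hnd).2 m c, Dop_pow_monomial]
    have ha : (m - (t.map fun i => Finsupp.single i (b i)).sum : Fin n →₀ ℕ) i = m i := by
      rw [Finsupp.tsub_apply, sum_single_apply_notMem b t hit]
      omega
    rw [ha, List.map_cons, List.sum_cons, List.map_cons, List.prod_cons, tsub_tsub,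
      add_comm ((t.map fun i => Finsupp.single i (b i)).sum), mul_assoc]

lemma theta_list (e : Fin n → ℕ) :
    ∀ (l : List (Fin n)) (m : Fin n →₀ ℕ) (c : K),
      ((l.map fun i => thetaOp K i ^ e i).prod) (monomial m c)
        = monomial m ((l.map fun i => (m i : K) ^ e i).prod * c)
  | [], m, c => by simp
  | i :: t, m, c => by
    rw [List.map_cons, List.prod_cons, Module.End.mul_apply, theta_list e t m c,
      thetaOp_pow_monomial, List.map_cons, List.prod_cons, ← mul_assoc,
      mul_comm ((m i : K) ^ e i), mul_assoc]

lemma Xpow_monomial (a : Fin n → ℕ) (m : Fin n →₀ ℕ) (c : K) :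
    Xpow K a (monomial m c) = monomial (toF a + m) c := by
  rw [Xpow, List.ofFn_eq_map, Xop_list, toF, Fin.sum_univ_def]

lemma Dpow_monomial (b : Fin n → ℕ) (m : Fin n →₀ ℕ) (c : K) :
    Dpow K b (monomial m c)
      = monomial (m - toF b) ((∏ i, descK K (m i) (b i)) * c) := by
  rw [Dpow, List.ofFn_eq_map, Dop_list K b _ (List.nodup_finRange n) m c, toF,
    Fin.sum_univ_def, Fin.prod_univ_def]

lemma thetaEval_monomial (f : MvPolynomial (Fin n) K) (m : Fin n →₀ ℕ) (c : K) :
    thetaEval K f (monomial m c)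
      = monomial m (eval (fun i => (m i : K)) f * c) := by
  rw [thetaEval, LinearMap.sum_apply, eval_eq']
  have step : ∀ d ∈ f.support,
      (f.coeff d • (List.ofFn fun i => thetaOp K i ^ d i).prod) (monomial m c)
        = monomial m (f.coeff d * ((∏ i, (m i : K) ^ d i) * c)) := by
    intro d _
    rw [LinearMap.smul_apply, List.ofFn_eq_map, theta_list, Fin.prod_univ_def,
      MvPolynomial.smul_monomial, smul_eq_mul]
  rw [Finset.sum_congr rfl step, ← map_sum (monomial m), Finset.sum_mul]
  congr 1
  refine Finset.sum_congr rfl fun d _ => ?_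
  ring
end Aux3

section Aux4
open Finset
variable (K : Type) [Field K] {n : ℕ}

lemma opApply (f : MvPolynomial (Fin n) K) (e w : Fin n → ℕ) (m : Fin n →₀ ℕ) (c : K) :
    (thetaEval K f * (Xpow K e * Dpow K w)) (monomial m c)
      = monomial (toF e + (m - toF w))
          (eval (fun i => (((toF e + (m - toF w) : Fin n →₀ ℕ)) i : K)) f
            * ((∏ i, descK K (m i) (w i)) * c)) := by
  rw [Module.End.mul_apply, Module.End.mul_apply, Dpow_monomial, Xpow_monomial,
    thetaEval_monomial]

lemma exp_apply (e w : Fin n → ℕ) (m : Fin n →₀ ℕ) (i : Fin n) :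
    (toF e + (m - toF w) : Fin n →₀ ℕ) i = m i - w i + e i := by
  rw [Finsupp.add_apply, Finsupp.tsub_apply, toF_apply, toF_apply]
  omega

lemma eval_shiftPoly (α : Fin n → ℤ) (g : MvPolynomial (Fin n) K) (p : Fin n → K) :
    eval p (shiftPoly K α g) = eval (fun i => p i + (α i : K)) g := by
  have hc : ∀ (r : Fin n → K) (q : MvPolynomial (Fin n) K), aeval r q = eval r q :=
    fun r q => by rw [← coe_aeval_eq_eval]; rfl
  rw [shiftPoly, ← hc, ← AlgHom.comp_apply, comp_aeval]
  rw [hc]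
  have harg : (fun i => (aeval p) (X i + C ((α i : K)))) = fun i => p i + (α i : K) := by
    funext i
    simp [hc]
  rw [harg]
end Aux4


open Finset in
/-- For all `α, β ∈ ℤ^n` and `f, g ∈ K[t_1,…,t_n]`:
`(f(θ) ∘ X^{e(α)} ∘ D^{w(α)}) ∘ (g(θ) ∘ X^{e(β)} ∘ D^{w(β)})
  = (f · g^{[α]} · γ_{α,β})(θ) ∘ X^{e(α+β)} ∘ D^{w(α+β)}`. -/
theorem homogeneous_product_formula (K : Type) [Field K] [CharZero K]
    (n : ℕ) (hn : 0 < n) (α β : Fin n → ℤ) (f g : MvPolynomial (Fin n) K) :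
    (thetaEval K f * (Xpow K (ez α) * Dpow K (wz α)))
        * (thetaEval K g * (Xpow K (ez β) * Dpow K (wz β)))
      = thetaEval K (f * shiftPoly K α g * gammaPoly K α β)
          * (Xpow K (ez (α + β)) * Dpow K (wz (α + β))) := by
  refine (MvPolynomial.basisMonomials (Fin n) K).ext fun m => ?_
  have hb : (MvPolynomial.basisMonomials (Fin n) K) m = monomial m 1 := by
    rw [coe_basisMonomials]
  rw [hb, Module.End.mul_apply, opApply, opApply, opApply]
  set m1 : Fin n →₀ ℕ := toF (ez β) + (m - toF (wz β)) with hm1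
  set m2 : Fin n →₀ ℕ := toF (ez α) + (m1 - toF (wz α)) with hm2
  set mt : Fin n →₀ ℕ := toF (ez (α + β)) + (m - toF (wz (α + β))) with hmt
  set pt : Fin n → K := fun i => ((mt i : ℕ) : K) with hpt
  -- pointwise values
  have hm1i : ∀ i, m1 i = m i - (β i).toNat + (-(β i)).toNat := fun i => exp_apply _ _ _ i
  have hm2i : ∀ i, m2 i = m1 i - (α i).toNat + (-(α i)).toNat := fun i => exp_apply _ _ _ i
  have hmti : ∀ i, mt i = m i - (α i + β i).toNat + (-(α i + β i)).toNat := by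
    intro i
    have := exp_apply (ez (α + β)) (wz (α + β)) m i
    simpa [ez, wz, Pi.add_apply, hmt] using this
  -- the γ product identity
  have hP : ∏ i, (descK K (m i) ((β i).toNat) * descK K (m1 i) ((α i).toNat))
      = ∏ i, (descK K (m i) ((α i + β i).toNat)
          * eval pt (gammaT K i (α i) (β i))) := by
    refine Finset.prod_congr rfl fun i _ => ?_
    have hp : pt i = ((m i - (α i + β i).toNat + (-(α i + β i)).toNat : ℕ) : K) := by
      rw [hpt]; exact congrArg _ (hmti i)
    have := coord K (α i) (β i) (m i) pt hp
    rw [← hm1i i] at this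
    exact this
  have hPQfromP : (∏ i, descK K (m i) ((β i).toNat)) * (∏ i, descK K (m1 i) ((α i).toNat))
      = (∏ i, descK K (m i) ((α i + β i).toNat)) * ∏ i, eval pt (gammaT K i (α i) (β i)) := by
    rw [← Finset.prod_mul_distrib, ← Finset.prod_mul_distrib]
    exact hP
  -- eval of the triple product
  have hevalsplit : eval pt (f * shiftPoly K α g * gammaPoly K α β)
      = eval pt f * eval (fun i => pt i + (α i : K)) g
          * ∏ i, eval pt (gammaT K i (α i) (β i)) := by
    rw [map_mul, map_mul, eval_shiftPoly, gammaPoly, map_prod]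
  rw [hevalsplit]
  -- unfold wz in descK products
  have hwβ : (∏ i, descK K (m i) (wz β i)) = ∏ i, descK K (m i) ((β i).toNat) := rfl
  have hwα : (∏ i, descK K (m1 i) (wz α i)) = ∏ i, descK K (m1 i) ((α i).toNat) := rfl
  have hwαβ : (∏ i, descK K (m i) (wz (α + β) i))
      = ∏ i, descK K (m i) ((α i + β i).toNat) := rfl
  rcases eq_or_ne ((∏ i, descK K (m i) ((β i).toNat))
      * (∏ i, descK K (m1 i) ((α i).toNat))) 0 with hzero | hnz
  · -- both sides are zero
    have hR : (∏ i, descK K (m i) ((α i + β i).toNat))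
        * ∏ i, eval pt (gammaT K i (α i) (β i)) = 0 := by rw [← hPQfromP]; exact hzero
    rw [show (eval (fun i => ((m2 i : ℕ) : K)) f
        * ((∏ i, descK K (m1 i) (wz α i))
          * (eval (fun i => ((m1 i : ℕ) : K)) g * ((∏ i, descK K (m i) (wz β i)) * 1))))
        = eval (fun i => ((m2 i : ℕ) : K)) f * eval (fun i => ((m1 i : ℕ) : K)) g
          * ((∏ i, descK K (m i) ((β i).toNat)) * (∏ i, descK K (m1 i) ((α i).toNat)))
        from by rw [hwα, hwβ]; ring]
    rw [show (eval pt f * eval (fun i => pt i + (α i : K)) g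
          * ∏ i, eval pt (gammaT K i (α i) (β i)))
        * ((∏ i, descK K (m i) (wz (α + β) i)) * 1)
        = eval pt f * eval (fun i => pt i + (α i : K)) g
          * ((∏ i, descK K (m i) ((α i + β i).toNat))
            * ∏ i, eval pt (gammaT K i (α i) (β i)))
        from by rw [hwαβ]; ring]
    rw [hzero, hR, mul_zero, mul_zero, map_zero, map_zero]
  · -- nonzero case: coefficients and exponents match
    have hfac : ∀ i : Fin n, descK K (m i) ((β i).toNat) ≠ 0 ∧
        descK K (m1 i) ((α i).toNat) ≠ 0 := by
      intro i
      have h1 := Finset.prod_ne_zero_iff.mp (left_ne_zero_of_mul hnz) i (Finset.mem_univ i)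
      have h2 := Finset.prod_ne_zero_iff.mp (right_ne_zero_of_mul hnz) i (Finset.mem_univ i)
      exact ⟨h1, h2⟩
    have hb1 : ∀ i, ((β i).toNat) ≤ m i := fun i => descK_ne_zero K (hfac i).1
    have hb2 : ∀ i, ((α i).toNat) ≤ m1 i := fun i => descK_ne_zero K (hfac i).2
    have hexp : m2 = mt := by
      ext i
      rw [hm2i i, hmti i, hm1i i]
      have := coord_exp (α i) (β i) (hb1 i) (by rw [← hm1i i]; exact hb2 i)
      exact this.1
    have hshift : (fun i => ((m1 i : ℕ) : K)) = fun i => pt i + (α i : K) := by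
      funext i
      have := (coord_exp (α i) (β i) (hb1 i) (by rw [← hm1i i]; exact hb2 i)).2
      rw [← hm1i i, ← hmti i] at this
      have := congrArg (fun z : ℤ => (z : K)) this
      push_cast at this
      simpa using this
    rw [hexp, hshift]
    congr 1
    rw [hwα, hwβ, hwαβ]
    have hpt2 : (fun i => ((mt i : ℕ) : K)) = pt := rfl
    rw [hpt2]
    linear_combination eval pt f * eval (fun i => pt i + (α i : K)) g * hPQfromP
end
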